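/- Let n ≥ 3 and let Φ = {±(e_i − e_j) : 1 ≤ i < j ≤ n} ⊂ ℝ^n be the type A_{n−1} root system, whose reflection group W ≅ S_n acts by permuting coordinates. Then every full circuit C ⊆ Φ lies in the W-orbit of the circuit C_0 = {e_1 − e_2, e_2 − e_3, …, e_{n−1} − e_n, e_n − e_1}, up to replacing roots by their negatives; that is, there is a permutation w ∈ S_n with {ℝα : α ∈ C} = {ℝ·w(β) : β ∈ C_0}. -/

import Mathlib

open scoped RealInnerProductSpace

variable {V : Type*} [NormedAddCommGroup V] [InnerProductSpace ℝ V] [FiniteDimensional ℝ V]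

/-- The orthogonal reflection in the hyperplane `α^⊥`. -/
noncomputable def reflAlong (α : V) : V ≃ₗᵢ[ℝ] V :=
  Submodule.reflection ((Submodule.span ℝ {α})ᗮ)

/-- An orthogonal reflection: the reflection through the hyperplane orthogonal to some
nonzero vector. -/
def IsReflection (g : V ≃ₗᵢ[ℝ] V) : Prop :=
  ∃ α : V, α ≠ 0 ∧ g = reflAlong α

/-- A finite real reflection group: a finite subgroup of the orthogonal group generated by its
reflections and fixing no nonzero vector. -/
def IsReflectionGroup (W : Subgroup (V ≃ₗᵢ[ℝ] V)) : Prop :=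
  (W : Set (V ≃ₗᵢ[ℝ] V)).Finite ∧
    Subgroup.closure {g | g ∈ W ∧ IsReflection g} = W ∧
    ∀ v : V, (∀ g ∈ W, g v = v) → v = 0
/-- A circuit: a finite linearly dependent set of vectors, every proper subset of which is
linearly independent. -/
def IsCircuit {V' : Type*} [AddCommGroup V'] [Module ℝ V'] (C : Set V') : Prop :=
  C.Finite ∧ ¬ LinearIndependent ℝ (fun x : C => (x : V')) ∧
    ∀ D : Set V', D ⊂ C → LinearIndependent ℝ (fun x : D => (x : V'))

/-- The standard basis vector `e_i` of `ℝⁿ`. -/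
noncomputable def eA (n : ℕ) (i : Fin n) : EuclideanSpace ℝ (Fin n) :=
  EuclideanSpace.single i 1

/-- The type `A_{n-1}` root system `{± (e_i - e_j) : i < j}`. -/
def PhiA (n : ℕ) : Set (EuclideanSpace ℝ (Fin n)) :=
  {x | ∃ i j : Fin n, i ≠ j ∧ x = eA n i - eA n j}

/-- The action of a permutation on `ℝⁿ` by permuting coordinates (so `e_i ↦ e_{σ i}`). -/
noncomputable def permuteCoords {n : ℕ} (σ : Equiv.Perm (Fin n))
    (x : EuclideanSpace ℝ (Fin n)) : EuclideanSpace ℝ (Fin n) :=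
  (WithLp.equiv 2 (Fin n → ℝ)).symm fun j => x (σ⁻¹ j)

/-- The set of lines spanned by the elements of `C`. -/
def linesOf {V' : Type*} [AddCommGroup V'] [Module ℝ V'] (C : Set V') :
    Set (Submodule ℝ V') :=
  (fun v => Submodule.span ℝ {v}) '' C


variable {n : ℕ}

lemma eA_apply (i j : Fin n) : eA n i j = if j = i then 1 else 0 :=
  EuclideanSpace.single_apply i 1 j

lemma root_apply (i j k : Fin n) :
    (eA n i - eA n j) k = (if k = i then 1 else 0) - (if k = j then 1 else 0) := by
  simp [eA_apply, PiLp.sub_apply]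

lemma inner_eA (x : EuclideanSpace ℝ (Fin n)) (i : Fin n) : ⟪x, eA n i⟫ = x i := by
  simp [eA, EuclideanSpace.inner_single_right]

omit [FiniteDimensional ℝ V] in
lemma reflAlong_self (α : V) : reflAlong α α = -α :=
  Submodule.reflection_orthogonalComplement_singleton_eq_neg α

omit [FiniteDimensional ℝ V] in
lemma reflAlong_fix {α y : V} (h : ⟪α, y⟫ = 0) : reflAlong α y = y :=
  Submodule.reflection_mem_subspace_eq_self (Submodule.mem_orthogonal_singleton_iff_inner_right.mpr h)

lemma inner_root_left (i j : Fin n) (y : EuclideanSpace ℝ (Fin n)) :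
    ⟪eA n i - eA n j, y⟫ = y i - y j := by
  rw [inner_sub_left, real_inner_comm, inner_eA, real_inner_comm, inner_eA]

lemma reflAlong_root (i j : Fin n) : reflAlong (eA n i - eA n j) (eA n i) = eA n j := by
  set α := eA n i - eA n j with hα
  have h1 : reflAlong α (eA n i + eA n j) = eA n i + eA n j := by
    apply reflAlong_fix
    rw [inner_root_left]
    simp only [eA_apply, PiLp.add_apply]
    by_cases h : i = j <;> simp [h, eq_comm]
  have h2 := reflAlong_self α
  have key : eA n i = (1/2 : ℝ) • ((eA n i + eA n j) + α) := by
    rw [hα, smul_add]; module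
  rw [key, map_smul, map_add, h1, h2, hα]
  module

lemma root_eq_iff {i j k l : Fin n} (hij : i ≠ j) (hkl : k ≠ l) :
    eA n i - eA n j = eA n k - eA n l ↔ i = k ∧ j = l := by
  constructor
  · intro h
    have hi := congrArg (fun v : EuclideanSpace ℝ (Fin n) => v i) h
    have hj := congrArg (fun v : EuclideanSpace ℝ (Fin n) => v j) h
    simp only [root_apply] at hi hj
    constructor
    · by_contra hik
      have hi' : (1 : ℝ) - 0 = (if i = k then 1 else 0) - (if i = l then 1 else 0) := by
        simpa [hij] using hi
      rw [if_neg hik] at hi'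
      split_ifs at hi' <;> norm_num at hi'
    · by_contra hjl
      have hj' : (0 : ℝ) - 1 = (if j = k then 1 else 0) - (if j = l then 1 else 0) := by
        simpa [hij.symm] using hj
      rw [if_neg hjl] at hj'
      split_ifs at hj' <;> norm_num at hj'
  · rintro ⟨rfl, rfl⟩; rfl

lemma span_root_swap (i j : Fin n) :
    Submodule.span ℝ {eA n i - eA n j} = Submodule.span ℝ {eA n j - eA n i} := by
  have : ({eA n i - eA n j} : Set (EuclideanSpace ℝ (Fin n))) = -{eA n j - eA n i} := by
    rw [Set.neg_singleton]; rw [neg_sub]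
  rw [this, Submodule.span_neg]

omit [FiniteDimensional ℝ V] in
lemma indep_eval {s : Set V} (h : LinearIndependent ℝ (fun x : s => (x : V)))
    (F : Finset V) (hFs : ↑F ⊆ s) (c : V → ℝ) (hc : ∑ x ∈ F, c x • x = 0) :
    ∀ x ∈ F, c x = 0 := by
  have h2 : LinearIndependent ℝ (fun x : (F : Set V) => (x : V)) := LinearIndepOn.mono (R := ℝ) (v := id) h hFs
  rw [Fintype.linearIndependent_iff] at h2
  intro x hx
  have hsum : ∑ y : (F : Set V), c (y : V) • (y : V) = 0 := by
    rw [show (∑ y : (F : Set V), c (y : V) • (y : V)) = ∑ y ∈ F, c y • y from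
      Finset.sum_coe_sort F (fun y => c y • y)]
    exact hc
  exact h2 (fun y => c (y : V)) hsum ⟨x, hx⟩

omit [FiniteDimensional ℝ V] in
lemma dep_exists {s : Set V} (hs : s.Finite)
    (h : ¬ LinearIndependent ℝ (fun x : s => (x : V))) :
    ∃ c : V → ℝ, (∀ x, x ∉ s → c x = 0) ∧ (∑ x ∈ hs.toFinset, c x • x = 0) ∧
      ∃ x ∈ s, c x ≠ 0 := by
  haveI := hs.fintype
  rw [Fintype.not_linearIndependent_iff] at h
  obtain ⟨g, hg0, x0, hx0⟩ := h
  classical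
  refine ⟨fun v => if hv : v ∈ s then g ⟨v, hv⟩ else 0, fun x hx => dif_neg hx, ?_, x0, x0.2, ?_⟩
  · rw [← Finset.sum_coe_sort hs.toFinset (fun y => _ • y)]
    rw [← hg0]
    apply Fintype.sum_equiv (Equiv.subtypeEquivRight (fun x => (hs.mem_toFinset).symm)).symm
    intro y
    simp [Equiv.subtypeEquivRight, (hs.mem_toFinset.mp y.2)]; rfl
  · simpa [x0.2] using hx0

lemma sum_apply_euclidean {ι : Type*} (s : Finset ι) (f : ι → EuclideanSpace ℝ (Fin n))
    (k : Fin n) : (∑ x ∈ s, f x) k = ∑ x ∈ s, f x k := by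
  induction s using Finset.cons_induction with
  | empty => rfl
  | cons a s ha ih => rw [Finset.sum_cons, Finset.sum_cons, PiLp.add_apply, ih]

lemma permuteCoords_root (σ : Equiv.Perm (Fin n)) (i j : Fin n) :
    permuteCoords σ (eA n i - eA n j) = eA n (σ i) - eA n (σ j) := by
  ext k
  show (eA n i - eA n j) (σ⁻¹ k) = (eA n (σ i) - eA n (σ j)) k
  rw [root_apply, root_apply]
  simp only [Equiv.Perm.inv_eq_iff_eq]

lemma fixes_of_closure {C : Set (EuclideanSpace ℝ (Fin n))} {i : Fin n}
    (hC : ∀ x ∈ C, x i = 0) {g : EuclideanSpace ℝ (Fin n) ≃ₗᵢ[ℝ] EuclideanSpace ℝ (Fin n)}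
    (hg : g ∈ Subgroup.closure (reflAlong '' C)) :
    g (eA n i) = eA n i := by
  induction hg using Subgroup.closure_induction with
  | mem x hx =>
    obtain ⟨α, hα, rfl⟩ := hx
    exact reflAlong_fix (by rw [inner_eA]; exact hC α hα)
  | one => rfl
  | mul x y hx hy px py =>
    show (x * y) (eA n i) = eA n i
    rw [LinearIsometryEquiv.coe_mul, Function.comp_apply, py, px]
  | inv x hx px =>
    have h2 := congrArg (fun v => x.symm v) px
    simp only [x.symm_apply_apply] at h2
    exact h2.symm

lemma eA_ne {i j : Fin n} (h : i ≠ j) : eA n i ≠ eA n j := by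
  intro he
  have := congrArg (fun v : EuclideanSpace ℝ (Fin n) => v i) he
  simp [eA_apply, h] at this

/-- Every full circuit in the type `A_{n-1}` root system lies, up to signs of the roots, in the
`S_n`-orbit of the standard cyclic circuit `{e_1 - e_2, …, e_{n-1} - e_n, e_n - e_1}`. -/
theorem stmt6 (n : ℕ) (hn : 3 ≤ n)
    (C : Set (EuclideanSpace ℝ (Fin n)))
    (hCΦ : C ⊆ PhiA n) (hcirc : IsCircuit C)
    (hfull : Subgroup.closure (reflAlong '' C)
      = Subgroup.closure (reflAlong '' PhiA n)) :
    ∃ σ : Equiv.Perm (Fin n),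
      linesOf C =
        linesOf (permuteCoords σ ''
          (Set.range fun i : Fin n =>
            eA n i - eA n ⟨((i : ℕ) + 1) % n, Nat.mod_lt _ (by omega)⟩)) := by
  classical
  set F : Finset (EuclideanSpace ℝ (Fin n)) := hcirc.1.toFinset with hFdef
  have hmemF : ∀ x, x ∈ F ↔ x ∈ C := fun x => hcirc.1.mem_toFinset
  have hFC : (F : Set (EuclideanSpace ℝ (Fin n))) = C := hcirc.1.coe_toFinset
  -- dependency coefficients
  obtain ⟨c, hc0, hcsum, x₀, hx₀C, hcx₀⟩ := dep_exists hcirc.1 hcirc.2.1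
  -- all coefficients nonzero
  have hcne : ∀ x ∈ C, c x ≠ 0 := by
    intro x hxC hx0
    have hD : C \ {x} ⊂ C := Set.sdiff_singleton_ssubset.mpr hxC
    have hind := hcirc.2.2 _ hD
    have hall : ∀ y ∈ F.erase x, c y = 0 := by
      refine indep_eval hind (F.erase x) ?_ c ?_
      · intro y hy
        have hy' := Finset.mem_coe.mp hy
        exact ⟨(hmemF y).mp (Finset.mem_of_mem_erase hy'), Finset.ne_of_mem_erase hy'⟩
      · rw [Finset.sum_erase _ (by rw [hx0, zero_smul])]
        exact hcsum
    by_cases hxx : x₀ = x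
    · exact hcx₀ (hxx ▸ hx0)
    · exact hcx₀ (hall x₀ (Finset.mem_erase.mpr ⟨hxx, (hmemF x₀).mpr hx₀C⟩))
  -- coordinate equations
  have hcoord : ∀ i : Fin n, ∑ x ∈ F, c x * x i = 0 := by
    intro i
    have h := congrArg (fun v : EuclideanSpace ℝ (Fin n) => v i) hcsum
    simp only [sum_apply_euclidean, PiLp.smul_apply, smul_eq_mul] at h
    simpa using h
  -- edge endpoints
  have hrep : ∀ x : EuclideanSpace ℝ (Fin n), ∃ pq : Fin n × Fin n,
      x ∈ C → pq.1 ≠ pq.2 ∧ x = eA n pq.1 - eA n pq.2 := by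
    intro x
    by_cases hx : x ∈ C
    · obtain ⟨i, j, hij, hxe⟩ := hCΦ hx
      exact ⟨(i, j), fun _ => ⟨hij, hxe⟩⟩
    · exact ⟨(⟨0, by omega⟩, ⟨0, by omega⟩), fun h => absurd h hx⟩
  choose pq hpq using hrep
  set a : EuclideanSpace ℝ (Fin n) → Fin n := fun x => (pq x).1 with hadef
  set b : EuclideanSpace ℝ (Fin n) → Fin n := fun x => (pq x).2 with hbdef
  have hab : ∀ x ∈ C, a x ≠ b x := fun x hx => (hpq x hx).1
  have hxab : ∀ x ∈ C, x = eA n (a x) - eA n (b x) := fun x hx => (hpq x hx).2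
  have hcoords : ∀ x ∈ C, ∀ k, x k = (if k = a x then 1 else 0) - (if k = b x then 1 else 0) := by
    intro x hx k
    have h := root_apply (a x) (b x) k (n := n)
    rw [← hxab x hx] at h; exact h
  have hzero : ∀ x ∈ C, ∀ k, k ≠ a x → k ≠ b x → x k = 0 := by
    intro x hx k h1 h2; rw [hcoords x hx k, if_neg h1, if_neg h2]; ring
  have hne0 : ∀ x ∈ C, ∀ k, x k ≠ 0 → k = a x ∨ k = b x := by
    intro x hx k hk
    by_contra hcon
    push_neg at hcon
    exact hk (hzero x hx k hcon.1 hcon.2)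
  -- degree one from fullness
  have hdeg1 : ∀ i : Fin n, ∃ x ∈ C, x i ≠ 0 := by
    intro i
    by_contra hcon
    push_neg at hcon
    have hall : ∀ x ∈ C, x i = 0 := hcon
    obtain ⟨j, hij⟩ : ∃ j : Fin n, i ≠ j := by
      rcases eq_or_ne (i : ℕ) 0 with h0 | h0
      · exact ⟨⟨1, by omega⟩, by intro h; have := congrArg Fin.val h; simp at this; omega⟩
      · exact ⟨⟨0, by omega⟩, by intro h; have := congrArg Fin.val h; simp at this; omega⟩
    have hmem : reflAlong (eA n i - eA n j) ∈ Subgroup.closure (reflAlong '' PhiA n) :=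
      Subgroup.subset_closure ⟨_, ⟨i, j, hij, rfl⟩, rfl⟩
    rw [← hfull] at hmem
    have hfix := fixes_of_closure hall hmem
    rw [reflAlong_root] at hfix
    exact eA_ne (Ne.symm hij) hfix
  -- degree set
  set D : Fin n → Finset (EuclideanSpace ℝ (Fin n)) :=
    fun i => F.filter (fun x => x i ≠ 0) with hDdef
  -- degree at least two
  have hdeg2 : ∀ i : Fin n, ∃ x ∈ C, ∃ y ∈ C, x ≠ y ∧ x i ≠ 0 ∧ y i ≠ 0 := by
    intro i
    obtain ⟨x, hxC, hxi⟩ := hdeg1 i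
    have hterm : c x * x i ≠ 0 := mul_ne_zero (hcne x hxC) hxi
    have hxF : x ∈ F := (hmemF x).mpr hxC
    by_contra hcon
    push_neg at hcon
    have hsum : ∑ z ∈ F, c z * z i = c x * x i := by
      apply Finset.sum_eq_single_of_mem x hxF
      intro z hzF hzx
      have hz0 : z i = 0 := hcon x hxC z ((hmemF z).mp hzF) (Ne.symm hzx) hxi
      rw [hz0, mul_zero]
    rw [hcoord i] at hsum
    exact hterm hsum.symm
  -- support of each root has exactly two coordinates
  have hsupp : ∀ x ∈ C, (Finset.univ.filter fun i : Fin n => x i ≠ 0).card = 2 := by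
    intro x hx
    have hset : (Finset.univ.filter fun i : Fin n => x i ≠ 0) = {a x, b x} := by
      ext k
      simp only [Finset.mem_filter, Finset.mem_univ, true_and, Finset.mem_insert,
        Finset.mem_singleton]
      constructor
      · exact hne0 x hx k
      · rintro (rfl | rfl)
        · rw [hcoords x hx, if_pos rfl, if_neg (hab x hx)]; norm_num
        · rw [hcoords x hx, if_neg (Ne.symm (hab x hx)), if_pos rfl]; norm_num
    rw [hset, Finset.card_pair (hab x hx)]
  -- double counting
  have hdc : ∑ i : Fin n, (D i).card = 2 * F.card := by
    simp only [hDdef, Finset.card_filter]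
    rw [Finset.sum_comm]
    have : ∀ x ∈ F, (∑ i : Fin n, if x i ≠ 0 then 1 else 0) = 2 := by
      intro x hx
      rw [← Finset.card_filter]
      exact hsupp x ((hmemF x).mp hx)
    rw [Finset.sum_congr rfl this, Finset.sum_const, smul_eq_mul, mul_comm]
  have hDge2 : ∀ i, 2 ≤ (D i).card := by
    intro i
    obtain ⟨x, hx, y, hy, hxy, hxi, hyi⟩ := hdeg2 i
    refine Finset.one_lt_card.mpr ⟨x, ?_, y, ?_, hxy⟩ <;>
      simp only [hDdef, Finset.mem_filter]
    · exact ⟨(hmemF x).mpr hx, hxi⟩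
    · exact ⟨(hmemF y).mpr hy, hyi⟩
  -- cardinality of C
  have hcardle : F.card ≤ n := by
    set u : EuclideanSpace ℝ (Fin n) := (WithLp.equiv 2 _).symm (fun _ => (1 : ℝ)) with hudef
    have hu_apply : ∀ k : Fin n, u k = 1 := fun k => rfl
    have huC : u ∉ C := by
      intro huC
      have h1 := hcoords u huC (b u)
      rw [if_neg (Ne.symm (hab u huC)), if_pos rfl, hu_apply] at h1
      norm_num at h1
    have hinner : ∀ x ∈ C, ⟪u, x⟫ = 0 := by
      intro x hx
      rw [hxab x hx, inner_sub_right, inner_eA, inner_eA, hu_apply, hu_apply, sub_self]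
    have hu0 : u ≠ 0 := by
      intro h0
      have := congrArg (fun v : EuclideanSpace ℝ (Fin n) => v ⟨0, by omega⟩) h0
      simp only [hu_apply] at this
      norm_num [PiLp.zero_apply] at this
    have hunotspan : u ∉ Submodule.span ℝ (C \ {x₀}) := by
      intro hmem
      have hle : Submodule.span ℝ (C \ {x₀}) ≤ (Submodule.span ℝ {u})ᗮ := by
        rw [Submodule.span_le]
        intro x hx
        exact Submodule.mem_orthogonal_singleton_iff_inner_right.mpr (hinner x hx.1)
      have h2 := hle hmem
      rw [Submodule.mem_orthogonal_singleton_iff_inner_right] at h2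
      exact hu0 (inner_self_eq_zero.mp h2)
    have hssub : C \ {x₀} ⊂ C := Set.sdiff_singleton_ssubset.mpr hx₀C
    have hind := hcirc.2.2 _ hssub
    have hins : LinearIndependent ℝ
        (fun y : ↥(insert u (C \ {x₀})) => (y : EuclideanSpace ℝ (Fin n))) :=
      LinearIndepOn.id_insert hind hunotspan
    have hGset : ((insert u (F.erase x₀) : Finset (EuclideanSpace ℝ (Fin n))) :
        Set (EuclideanSpace ℝ (Fin n))) = insert u (C \ {x₀}) := by
      rw [Finset.coe_insert, Finset.coe_erase, hFC]
    have hindG : LinearIndependent ℝ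
        (fun x : ↥(insert u (F.erase x₀) : Finset (EuclideanSpace ℝ (Fin n))) =>
          (x : EuclideanSpace ℝ (Fin n))) := by
      rw [← hGset] at hins
      exact hins
    have hbound := hindG.finset_card_le_finrank
    rw [finrank_euclideanSpace_fin] at hbound
    have huF : u ∉ F.erase x₀ := fun h => huC ((hmemF u).mp (Finset.mem_of_mem_erase h))
    rw [Finset.card_insert_of_notMem huF, Finset.card_erase_of_mem ((hmemF x₀).mpr hx₀C)] at hbound
    have hpos : 0 < F.card := Finset.card_pos.mpr ⟨x₀, (hmemF x₀).mpr hx₀C⟩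
    omega
  have hcardge : n ≤ F.card := by
    have h1 : 2 * n ≤ ∑ i : Fin n, (D i).card := by
      calc 2 * n = ∑ _i : Fin n, 2 := by
              rw [Finset.sum_const, Finset.card_univ, Fintype.card_fin, smul_eq_mul, mul_comm]
        _ ≤ ∑ i : Fin n, (D i).card := Finset.sum_le_sum fun i _ => hDge2 i
    rw [hdc] at h1
    omega
  have hcard : F.card = n := le_antisymm hcardle hcardge
  -- degree exactly two
  have hD2 : ∀ i, (D i).card = 2 := by
    intro i
    by_contra hne2
    have hlt : 2 < (D i).card := lt_of_le_of_ne (hDge2 i) (Ne.symm hne2)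
    have h1 : ∑ _i : Fin n, 2 < ∑ i : Fin n, (D i).card :=
      Finset.sum_lt_sum (fun j _ => hDge2 j) ⟨i, Finset.mem_univ i, hlt⟩
    rw [hdc, hcard, Finset.sum_const, Finset.card_univ, Fintype.card_fin, smul_eq_mul,
      mul_comm] at h1
    omega
  -- heads and tails
  set hd : EuclideanSpace ℝ (Fin n) → Fin n := fun x => if 0 < c x then a x else b x with hhddef
  set tl : EuclideanSpace ℝ (Fin n) → Fin n := fun x => if 0 < c x then b x else a x with htldef
  have hd_pos : ∀ x, 0 < c x → hd x = a x := fun x h => if_pos h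
  have hd_neg : ∀ x, ¬ 0 < c x → hd x = b x := fun x h => if_neg h
  have tl_pos : ∀ x, 0 < c x → tl x = b x := fun x h => if_pos h
  have tl_neg : ∀ x, ¬ 0 < c x → tl x = a x := fun x h => if_neg h
  have hdtl_ne : ∀ x ∈ C, hd x ≠ tl x := by
    intro x hx
    by_cases hc : 0 < c x
    · rw [hd_pos x hc, tl_pos x hc]; exact hab x hx
    · rw [hd_neg x hc, tl_neg x hc]; exact (hab x hx).symm
  have hhead_pos : ∀ x ∈ C, c x * x (hd x) = |c x| := by
    intro x hx
    by_cases hc : 0 < c x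
    · rw [hd_pos x hc, hcoords x hx, if_neg (hab x hx)]; norm_num [abs_of_pos hc]
    · have hneg : c x < 0 := lt_of_le_of_ne (le_of_not_gt hc) (hcne x hx)
      rw [hd_neg x hc, hcoords x hx, if_neg (Ne.symm (hab x hx))]; norm_num [abs_of_neg hneg]
  have htail_neg : ∀ x ∈ C, c x * x (tl x) = -|c x| := by
    intro x hx
    by_cases hc : 0 < c x
    · rw [tl_pos x hc, hcoords x hx, if_neg (Ne.symm (hab x hx))]; norm_num [abs_of_pos hc]
    · have hneg : c x < 0 := lt_of_le_of_ne (le_of_not_gt hc) (hcne x hx)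
      rw [tl_neg x hc, hcoords x hx, if_neg (hab x hx)]; norm_num [abs_of_neg hneg]
  have hsign : ∀ x ∈ C, (if 0 < c x then (1:ℝ) else -1) • x = eA n (hd x) - eA n (tl x) := by
    intro x hx
    have hx' := hxab x hx
    by_cases hc : 0 < c x
    · rw [hd_pos x hc, tl_pos x hc, if_pos hc, one_smul]
      conv_lhs => rw [hx']
    · rw [hd_neg x hc, tl_neg x hc, if_neg hc]
      conv_lhs => rw [hx']
      module
  -- heads (and tails) are distinct
  have hDpair : ∀ (i : Fin n), ∀ x ∈ C, ∀ y ∈ C, x ≠ y → x i ≠ 0 → y i ≠ 0 →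
      ∑ z ∈ F, c z * z i = c x * x i + c y * y i := by
    intro i x hx y hy hxy hxi hyi
    have hxD : x ∈ D i := Finset.mem_filter.mpr ⟨(hmemF x).mpr hx, hxi⟩
    have hyD : y ∈ D i := Finset.mem_filter.mpr ⟨(hmemF y).mpr hy, hyi⟩
    have hpair : ({x, y} : Finset (EuclideanSpace ℝ (Fin n))) = D i := by
      apply Finset.eq_of_subset_of_card_le
      · intro z hz
        rcases Finset.mem_insert.mp hz with rfl | hz
        · exact hxD
        · rw [Finset.mem_singleton.mp hz]; exact hyD
      · rw [hD2 i, Finset.card_pair hxy]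
    have hsub : D i ⊆ F := Finset.filter_subset _ _
    rw [← Finset.sum_subset hsub (fun z hzF hzD => ?_), ← hpair, Finset.sum_pair hxy]
    have hz0 : z i = 0 := by
      by_contra hz0
      exact hzD (Finset.mem_filter.mpr ⟨hzF, hz0⟩)
    rw [hz0, mul_zero]
  have hd_inj : ∀ x ∈ C, ∀ y ∈ C, x ≠ y → hd x ≠ hd y := by
    intro x hx y hy hxy heq
    have hxi : x (hd x) ≠ 0 := by
      intro h0
      have := hhead_pos x hx
      rw [h0, mul_zero] at this
      exact hcne x hx (abs_eq_zero.mp this.symm)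
    have hyi : y (hd x) ≠ 0 := by
      rw [heq]
      intro h0
      have := hhead_pos y hy
      rw [h0, mul_zero] at this
      exact hcne y hy (abs_eq_zero.mp this.symm)
    have hsum := hDpair (hd x) x hx y hy hxy hxi hyi
    rw [hcoord (hd x), hhead_pos x hx, heq, hhead_pos y hy] at hsum
    have h1 : 0 < |c x| := abs_pos.mpr (hcne x hx)
    have h2 : 0 < |c y| := abs_pos.mpr (hcne y hy)
    linarith
  have tl_inj : ∀ x ∈ C, ∀ y ∈ C, x ≠ y → tl x ≠ tl y := by
    intro x hx y hy hxy heq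
    have hxi : x (tl x) ≠ 0 := by
      intro h0
      have := htail_neg x hx
      rw [h0, mul_zero] at this
      exact hcne x hx (abs_eq_zero.mp (neg_eq_zero.mp this.symm))
    have hyi : y (tl x) ≠ 0 := by
      rw [heq]
      intro h0
      have := htail_neg y hy
      rw [h0, mul_zero] at this
      exact hcne y hy (abs_eq_zero.mp (neg_eq_zero.mp this.symm))
    have hsum := hDpair (tl x) x hx y hy hxy hxi hyi
    rw [hcoord (tl x), htail_neg x hx, heq, htail_neg y hy] at hsum
    have h1 : 0 < |c x| := abs_pos.mpr (hcne x hx)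
    have h2 : 0 < |c y| := abs_pos.mpr (hcne y hy)
    linarith
  -- bijections
  haveI : Fintype ↥F := FinsetCoe.fintype F
  have hcardF : Fintype.card ↥F = n := by rw [Fintype.card_coe]; exact hcard
  have hHdbij : Function.Bijective (fun x : ↥F => hd ↑x) := by
    refine (Fintype.bijective_iff_injective_and_card _).mpr ⟨?_, by rw [hcardF, Fintype.card_fin]⟩
    intro x y hxy
    by_contra hne
    exact hd_inj ↑x ((hmemF _).mp x.2) ↑y ((hmemF _).mp y.2)
      (fun h => hne (Subtype.ext h)) hxy
  have hTlbij : Function.Bijective (fun x : ↥F => tl ↑x) := by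
    refine (Fintype.bijective_iff_injective_and_card _).mpr ⟨?_, by rw [hcardF, Fintype.card_fin]⟩
    intro x y hxy
    by_contra hne
    exact tl_inj ↑x ((hmemF _).mp x.2) ↑y ((hmemF _).mp y.2)
      (fun h => hne (Subtype.ext h)) hxy
  set Hd := Equiv.ofBijective _ hHdbij with hHddef
  set Tl := Equiv.ofBijective _ hTlbij with hTldef
  set τ : Equiv.Perm (Fin n) := Tl.symm.trans Hd with hτdef
  have hτ : ∀ x : ↥F, τ (tl ↑x) = hd ↑x := by
    intro x
    have : Tl x = tl ↑x := rfl
    rw [hτdef]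
    simp only [Equiv.trans_apply, ← this, Equiv.symm_apply_apply]
    rfl
  -- the permutation τ is an n-cycle through every point
  set i₀ : Fin n := ⟨0, by omega⟩ with hi₀def
  set p := Function.minimalPeriod (⇑τ) i₀ with hpdef
  have hppos : 0 < p := by
    have hper : Function.IsPeriodicPt (⇑τ) (orderOf τ) i₀ := by
      show (⇑τ)^[orderOf τ] i₀ = i₀
      rw [Equiv.Perm.iterate_eq_pow, pow_orderOf_eq_one]
      rfl
    exact hper.minimalPeriod_pos (orderOf_pos τ)
  set O : Finset (Fin n) := (Finset.range p).image (fun k => (⇑τ)^[k] i₀) with hOdef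
  have hOcard : O.card = p := by
    rw [hOdef, Finset.card_image_of_injOn, Finset.card_range]
    rw [Finset.coe_range]
    exact Function.iterate_injOn_Iio_minimalPeriod
  have hplen : p ≤ n := by
    rw [← hOcard]
    have h2 := Finset.card_le_univ O
    simpa using h2
  have hτmem : ∀ j ∈ O, τ j ∈ O := by
    intro j hj
    obtain ⟨k, hk, rfl⟩ := Finset.mem_image.mp hj
    rw [Finset.mem_range] at hk
    show τ ((⇑τ)^[k] i₀) ∈ O
    have hstep : τ ((⇑τ)^[k] i₀) = (⇑τ)^[k+1] i₀ := (Function.iterate_succ_apply' (⇑τ) k i₀).symm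
    rw [hstep]
    rcases eq_or_lt_of_le (Nat.succ_le_of_lt hk) with heq | hlt
    · rw [show k + 1 = p from heq]
      have : (⇑τ)^[p] i₀ = i₀ := Function.iterate_minimalPeriod
      rw [this]
      exact Finset.mem_image.mpr ⟨0, Finset.mem_range.mpr hppos, rfl⟩
    · exact Finset.mem_image.mpr ⟨k + 1, Finset.mem_range.mpr hlt, rfl⟩
  have hOinv : O.image ⇑τ = O := by
    apply Finset.eq_of_subset_of_card_le
    · intro j hj
      obtain ⟨k, hk, rfl⟩ := Finset.mem_image.mp hj
      exact hτmem k hk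
    · rw [Finset.card_image_of_injective _ τ.injective]
  have hpn : p = n := by
    by_contra hne
    have hplt : p < n := lt_of_le_of_ne hplen hne
    set D' : Finset (EuclideanSpace ℝ (Fin n)) :=
      O.image (fun i => (↑(Tl.symm i) : EuclideanSpace ℝ (Fin n))) with hD'def
    have hTinj : Function.Injective
        (fun i : Fin n => (↑(Tl.symm i) : EuclideanSpace ℝ (Fin n))) :=
      fun i j hij => by
        have := Subtype.ext hij
        exact Tl.symm.injective (Subtype.ext hij)
    have hD'sub : D' ⊆ F := by
      intro z hz
      obtain ⟨i, hi, rfl⟩ := Finset.mem_image.mp hz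
      exact (Tl.symm i).2
    have hD'card : D'.card = p := by
      rw [hD'def, Finset.card_image_of_injective _ hTinj, hOcard]
    have htlval : ∀ i : Fin n, tl (↑(Tl.symm i)) = i := by
      intro i
      have : Tl (Tl.symm i) = i := Tl.apply_symm_apply i
      exact this
    have hhdval : ∀ i : Fin n, hd (↑(Tl.symm i)) = τ i := by
      intro i
      have h1 := hτ (Tl.symm i)
      rw [htlval i] at h1
      exact h1.symm
    set sgn : EuclideanSpace ℝ (Fin n) → ℝ := fun v => if 0 < c v then 1 else -1 with hsgndef
    have hzsum : ∑ z ∈ D', sgn z • z = 0 := by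
      rw [hD'def, Finset.sum_image (fun i _ j _ hij => hTinj hij)]
      have hcongr : ∀ i ∈ O, sgn (↑(Tl.symm i)) • (↑(Tl.symm i) : EuclideanSpace ℝ (Fin n))
          = eA n (τ i) - eA n i := by
        intro i hi
        have hmem : (↑(Tl.symm i) : EuclideanSpace ℝ (Fin n)) ∈ C :=
          (hmemF _).mp (Tl.symm i).2
        have := hsign _ hmem
        rw [hhdval i, htlval i] at this
        exact this
      rw [Finset.sum_congr rfl hcongr, Finset.sum_sub_distrib]
      rw [show (∑ i ∈ O, eA n (τ i)) = ∑ j ∈ O.image ⇑τ, eA n j from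
        (Finset.sum_image (fun i _ j _ hij => τ.injective hij)).symm, hOinv, sub_self]
    have hproper : (↑D' : Set (EuclideanSpace ℝ (Fin n))) ⊂ C := by
      rw [← hFC]
      apply Finset.coe_ssubset.mpr
      refine Finset.ssubset_iff_subset_ne.mpr ⟨hD'sub, fun h => ?_⟩
      rw [h, hcard] at hD'card
      omega
    have hind := hcirc.2.2 _ hproper
    have hzero' := indep_eval hind D' (le_refl _) sgn hzsum
    have hi₀O : i₀ ∈ O := Finset.mem_image.mpr ⟨0, Finset.mem_range.mpr hppos, rfl⟩
    have hmemD' : (↑(Tl.symm i₀) : EuclideanSpace ℝ (Fin n)) ∈ D' :=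
      Finset.mem_image_of_mem _ hi₀O
    have hval := hzero' _ hmemD'
    have h2 : (if 0 < c (↑(Tl.symm i₀) : EuclideanSpace ℝ (Fin n)) then (1:ℝ) else -1) = 0 := hval
    split_ifs at h2 <;> norm_num at h2
  -- final permutation
  have hσinj : Function.Injective (fun k : Fin n => (⇑τ)^[(k : ℕ)] i₀) := by
    intro k l hkl
    have hk : (k : ℕ) ∈ Set.Iio p := by rw [hpn]; exact k.2
    have hl : (l : ℕ) ∈ Set.Iio p := by rw [hpn]; exact l.2
    exact Fin.ext (Function.iterate_injOn_Iio_minimalPeriod hk hl hkl)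
  have hσbij := (Finite.injective_iff_bijective).mp hσinj
  set σp := Equiv.ofBijective _ hσbij with hσpdef
  have hσp_apply : ∀ k : Fin n, σp k = (⇑τ)^[(k : ℕ)] i₀ := fun k => rfl
  have hστ : ∀ (k : Fin n) (m : Fin n), (m : ℕ) = ((k : ℕ) + 1) % n → σp m = τ (σp k) := by
    intro k m hm
    rw [hσp_apply, hσp_apply, hm]
    show (⇑τ)^[((k : ℕ) + 1) % n] i₀ = τ ((⇑τ)^[(k : ℕ)] i₀)
    have h1 : (⇑τ)^[((k : ℕ) + 1) % p] i₀ = (⇑τ)^[(k : ℕ) + 1] i₀ :=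
      Function.iterate_mod_minimalPeriod_eq
    rw [hpn] at h1
    rw [h1, Function.iterate_succ_apply']
  have hspan : ∀ x ∈ C, Submodule.span ℝ {eA n (tl x) - eA n (hd x)}
      = Submodule.span ℝ {x} := by
    intro x hx
    have h1 := hsign x hx
    have h2 : eA n (tl x) - eA n (hd x) = (-(if 0 < c x then (1:ℝ) else -1)) • x := by
      rw [neg_smul, h1, neg_sub]
    rw [h2]
    apply Submodule.span_singleton_smul_eq
    rw [isUnit_iff_ne_zero]
    split_ifs <;> norm_num
  refine ⟨σp, ?_⟩
  ext L
  simp only [linesOf, Set.mem_image, Set.mem_range]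
  constructor
  · rintro ⟨x, hxC, rfl⟩
    have hxF : x ∈ F := (hmemF x).mpr hxC
    obtain ⟨k, hk⟩ := hσbij.2 (tl x)
    have hk' : σp k = tl x := hk
    refine ⟨permuteCoords σp (eA n k - eA n ⟨((k : ℕ) + 1) % n, Nat.mod_lt _ (by omega)⟩),
      ⟨eA n k - eA n ⟨((k : ℕ) + 1) % n, Nat.mod_lt _ (by omega)⟩, ⟨k, rfl⟩, rfl⟩, ?_⟩
    rw [permuteCoords_root, hστ k ⟨((k : ℕ) + 1) % n, Nat.mod_lt _ (by omega)⟩ rfl, hk']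
    have hhd : τ (tl x) = hd x := hτ ⟨x, hxF⟩
    rw [hhd]
    exact hspan x hxC
  · rintro ⟨v, ⟨w, ⟨k, rfl⟩, rfl⟩, rfl⟩
    set x : EuclideanSpace ℝ (Fin n) := ↑(Tl.symm (σp k)) with hxdef
    have hxC : x ∈ C := (hmemF x).mp (Tl.symm (σp k)).2
    refine ⟨x, hxC, ?_⟩
    have htlx : tl x = σp k := Tl.apply_symm_apply (σp k)
    have hhdx : hd x = τ (σp k) := by
      have h1 := hτ (Tl.symm (σp k))
      rw [show tl ↑(Tl.symm (σp k)) = σp k from htlx] at h1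
      exact h1.symm
    rw [permuteCoords_root, hστ k ⟨((k : ℕ) + 1) % n, Nat.mod_lt _ (by omega)⟩ rfl]
    rw [← htlx]
    rw [show τ (tl x) = hd x from by rw [htlx]; exact hhdx.symm]
    exact (hspan x hxC).symm
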